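/- Let n ≥ 1 and let X ⊆ [0,1]^{2n+1} be a Kolmogorov-type embedding of a compact metric space X with respect to a Kolmogorov family of covers (F^m)_{m∈ℕ}. Then the embedding is basic, i.e. the induced transformation L : C(Z,ℝ) → C(X,ℝ) is surjective: every continuous f : X → ℝ can be written as f(x) = g(y_1) + ⋯ + g(y_{2n+1}) for some continuous g : Z → ℝ, where (y_1,…,y_{2n+1}) are the coordinates of x. -/

import Mathlib

open Topology

/-- The topology of pointwise convergence on `C(T, ℝ)`: the topology induced from the
product topology on `ℝ^T` via the canonical injection. -/
def cpTop (T : Type*) [TopologicalSpace T] : TopologicalSpace C(T, ℝ) :=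
  TopologicalSpace.induced (fun f => (f : T → ℝ)) Pi.topologicalSpace

/-- A subset `A` of a topological space is zero-dimensional if the subspace `A` has a
topological base consisting of sets clopen in `A`. -/
def ZeroDimSubset {X : Type*} [TopologicalSpace X] (A : Set X) : Prop :=
  ∀ (a : A) (U : Set A), IsOpen U → a ∈ U → ∃ V : Set A, IsClopen V ∧ a ∈ V ∧ V ⊆ U

/-- The transformation induced by an embedding `X ⊆ Y₁ × ⋯ × Y_k`:
`L g x = g y₁ + ⋯ + g y_k`, where `(y₁, …, y_k)` are the coordinates of `x`, each `yᵢ`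
regarded as a point of the disjoint union `Z = Σ i, Y i`. -/
noncomputable def inducedL {ι : Type*} [Fintype ι] {Y : ι → Type*}
    [∀ i, TopologicalSpace (Y i)] (X : Set (Π i, Y i))
    (g : C((Σ i, Y i), ℝ)) : C(X, ℝ) where
  toFun x := ∑ i, g ⟨i, (x : Π i, Y i) i⟩
  continuous_toFun := by
    apply continuous_finset_sum
    intro i _
    exact g.continuous.comp (continuous_sigmaMk.comp
      ((continuous_apply i).comp continuous_subtype_val))

/-- The embedding `X ⊆ [0,1]^N` separates the cover `Fm = Fm 1 ∪ ⋯ ∪ Fm N` if, for each `i`,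
the images under the `i`-th coordinate projection of distinct members of `Fm i` are
pairwise disjoint. -/
def KolSeparates {N : ℕ} (X : Set (Fin N → unitInterval))
    (Fm : Fin N → Finset (Set X)) : Prop :=
  ∀ i : Fin N, ∀ s ∈ Fm i, ∀ t ∈ Fm i, s ≠ t →
    Disjoint ((fun x : X => (x : Fin N → unitInterval) i) '' s)
      ((fun x : X => (x : Fin N → unitInterval) i) '' t)

/-- A Kolmogorov family of covers of `X ⊆ [0,1]^N` (for dimension parameter `n`):
a sequence of finite covers `F m = F m 1 ∪ ⋯ ∪ F m N` of `X` by closed sets such that each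
point belongs to members of at least `n + 1` of the subfamilies `F m i`, each subfamily
consists of pairwise disjoint sets, and the mesh of `F m` tends to `0` as `m → ∞`. -/
def IsKolmogorovFamily {N : ℕ} (X : Set (Fin N → unitInterval)) (n : ℕ)
    (F : ℕ → Fin N → Finset (Set X)) : Prop :=
  (∀ m i, ∀ s ∈ F m i, IsClosed s) ∧
  (∀ (m : ℕ) (x : X), n + 1 ≤ {i : Fin N | ∃ s ∈ F m i, x ∈ s}.ncard) ∧
  (∀ m i, ∀ s ∈ F m i, ∀ t ∈ F m i, s ≠ t → Disjoint s t) ∧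
  (∀ ε : ℝ, 0 < ε → ∃ M : ℕ, ∀ m ≥ M, ∀ i, ∀ s ∈ F m i, Metric.diam s < ε)

/-- The embedding `X ⊆ [0,1]^N` is of Kolmogorov type with respect to the family `F` if for
every `ε > 0` there is `m` such that `F m` has mesh `< ε` and the embedding separates `F m`. -/
def IsKolmogorovTypeEmbedding {N : ℕ} (X : Set (Fin N → unitInterval))
    (F : ℕ → Fin N → Finset (Set X)) : Prop :=
  ∀ ε : ℝ, 0 < ε → ∃ m : ℕ,
    (∀ i, ∀ s ∈ F m i, Metric.diam s < ε) ∧ KolSeparates X (F m)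


open Metric

-- finite family of pairwise disjoint compacts admits uniformly disjoint thickenings
lemma kol_thickenings {T : Type*} [MetricSpace T] {ι : Type*} [DecidableEq ι] (S : Finset ι)
    (K : ι → Set T) (hK : ∀ s ∈ S, IsCompact (K s))
    (hd : ∀ s ∈ S, ∀ t ∈ S, s ≠ t → Disjoint (K s) (K t)) :
    ∃ δ : ℝ, 0 < δ ∧ ∀ s ∈ S, ∀ t ∈ S, s ≠ t →
      Disjoint (Metric.thickening δ (K s)) (Metric.thickening δ (K t)) := by
  have hpair : ∀ p ∈ S.offDiag, ∃ δ : ℝ, 0 < δ ∧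
      Disjoint (Metric.thickening δ (K p.1)) (Metric.thickening δ (K p.2)) := by
    rintro ⟨s, t⟩ hp
    rw [Finset.mem_offDiag] at hp
    exact (hd s hp.1 t hp.2.1 hp.2.2).exists_thickenings (hK s hp.1) (hK t hp.2.1).isClosed
  choose! δp hδp hdisj using hpair
  by_cases hne : S.offDiag.Nonempty
  · refine ⟨S.offDiag.inf' hne δp, ?_, ?_⟩
    · rw [Finset.lt_inf'_iff]
      exact fun p hp => hδp p hp
    · intro s hs t ht hst
      have hmem : (s, t) ∈ S.offDiag := Finset.mem_offDiag.2 ⟨hs, ht, hst⟩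
      have hle : S.offDiag.inf' hne δp ≤ δp (s, t) := Finset.inf'_le _ hmem
      exact Disjoint.mono (Metric.thickening_mono hle _) (Metric.thickening_mono hle _)
        (hdisj (s, t) hmem)
  · exact ⟨1, one_pos, fun s hs t ht hst =>
      absurd ⟨(s, t), Finset.mem_offDiag.2 ⟨hs, ht, hst⟩⟩ hne⟩

-- a function that is a prescribed constant on each of finitely many pairwise
-- disjoint compact sets, with a uniform bound
lemma kol_piecewise {T : Type*} [MetricSpace T] {ι : Type*} [DecidableEq ι]
    (S : Finset ι) (K : ι → Set T) (hK : ∀ s ∈ S, IsCompact (K s))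
    (hd : ∀ s ∈ S, ∀ t ∈ S, s ≠ t → Disjoint (K s) (K t))
    (c : ι → ℝ) (B : ℝ) (hB : 0 ≤ B) (hc : ∀ s ∈ S, |c s| ≤ B) :
    ∃ h : C(T, ℝ), (∀ s ∈ S, ∀ y ∈ K s, h y = c s) ∧ ∀ y, |h y| ≤ B := by
  obtain ⟨δ, hδ, hdisjU⟩ := kol_thickenings S K hK hd
  have hφ : ∀ s ∈ S, ∃ φ : C(T, ℝ), Set.EqOn φ 0 (Metric.thickening δ (K s))ᶜ ∧
      Set.EqOn φ 1 (K s) ∧ ∀ y, φ y ∈ Set.Icc (0:ℝ) 1 := by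
    intro s hs
    exact exists_continuous_zero_one_of_isClosed
      (isClosed_compl_iff.2 Metric.isOpen_thickening) (hK s hs).isClosed
      (by
        rw [Set.disjoint_compl_left_iff_subset]
        exact Metric.self_subset_thickening hδ _)
  choose! φ hφ0 hφ1 hφ01 using hφ
  refine ⟨⟨fun y => ∑ s ∈ S, c s * φ s y, by
    apply continuous_finset_sum
    exact fun s _ => continuous_const.mul (φ s).continuous⟩, ?_, ?_⟩
  · intro s hs y hy
    simp only [ContinuousMap.coe_mk]
    rw [Finset.sum_eq_single_of_mem s hs]
    · rw [hφ1 s hs hy, Pi.one_apply, mul_one]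
    · intro t ht hts
      have hyU : y ∈ Metric.thickening δ (K s) := Metric.self_subset_thickening hδ _ hy
      have : y ∈ (Metric.thickening δ (K t))ᶜ :=
        (hdisjU s hs t ht (Ne.symm hts)).subset_compl_right hyU
      rw [hφ0 t ht this, Pi.zero_apply, mul_zero]
  · intro y
    simp only [ContinuousMap.coe_mk]
    by_cases hex : ∃ s ∈ S, y ∈ Metric.thickening δ (K s)
    · obtain ⟨s₀, hs₀, hys₀⟩ := hex
      rw [Finset.sum_eq_single_of_mem s₀ hs₀]
      · have h01 := hφ01 s₀ hs₀ y
        calc |c s₀ * φ s₀ y| = |c s₀| * |φ s₀ y| := abs_mul _ _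
          _ ≤ B * 1 := by
              apply mul_le_mul (hc s₀ hs₀) _ (abs_nonneg _) hB
              rw [abs_of_nonneg h01.1]; exact h01.2
          _ = B := mul_one B
      · intro t ht hts
        have : y ∈ (Metric.thickening δ (K t))ᶜ :=
          (hdisjU s₀ hs₀ t ht (Ne.symm hts)).subset_compl_right hys₀
        rw [hφ0 t ht this, Pi.zero_apply, mul_zero]
    · push_neg at hex
      have : ∑ s ∈ S, c s * φ s y = 0 := by
        apply Finset.sum_eq_zero
        intro t ht
        rw [hφ0 t ht (hex t ht), Pi.zero_apply, mul_zero]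
      rw [this, abs_zero]; exact hB


-- key arithmetic estimate
lemma kol_est (νr kr Nr r ε u SA SB : ℝ)
    (hν : 0 < νr) (hkν : νr ≤ kr) (hkN : kr ≤ Nr)
    (hr : 0 ≤ r) (hε : 0 ≤ ε) (hu1 : u ≤ r) (hu2 : -r ≤ u)
    (hSA1 : kr * ((u - ε) / νr) ≤ SA) (hSA2 : SA ≤ kr * ((u + ε) / νr))
    (hSB : |SB| ≤ (Nr - kr) * (r / νr)) :
    |u - (SA + SB)| ≤ ((Nr - νr) * r + Nr * ε) / νr := by
  obtain ⟨hSB1, hSB2⟩ := abs_le.1 hSB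
  have e1 : kr * (u - ε) ≤ νr * SA := by
    have := mul_le_mul_of_nonneg_left hSA1 hν.le
    calc kr * (u - ε) = νr * (kr * ((u - ε) / νr)) := by field_simp; try ring
      _ ≤ νr * SA := this
  have e2 : νr * SA ≤ kr * (u + ε) := by
    have := mul_le_mul_of_nonneg_left hSA2 hν.le
    calc νr * SA ≤ νr * (kr * ((u + ε) / νr)) := this
      _ = kr * (u + ε) := by field_simp; try ring
  have e3 : -((Nr - kr) * r) ≤ νr * SB := by
    have := mul_le_mul_of_nonneg_left hSB1 hν.le
    calc -((Nr - kr) * r) = νr * (-((Nr - kr) * (r / νr))) := by field_simp; try ring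
      _ ≤ νr * SB := this
  have e4 : νr * SB ≤ (Nr - kr) * r := by
    have := mul_le_mul_of_nonneg_left hSB2 hν.le
    calc νr * SB ≤ νr * ((Nr - kr) * (r / νr)) := this
      _ = (Nr - kr) * r := by field_simp; try ring
  rw [le_div_iff₀ hν]
  have key : |νr * u - (νr * SA + νr * SB)| ≤ (Nr - νr) * r + Nr * ε := by
    rw [abs_le]
    rcases le_or_gt 0 u with hu | hu
    · constructor
      · nlinarith [mul_nonneg (sub_nonneg.2 hkν) hu, mul_nonneg (sub_nonneg.2 hkν) (sub_nonneg.2 hu1),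
          mul_nonneg (sub_nonneg.2 hkN) hε, mul_nonneg (sub_nonneg.2 hkν) hr]
      · nlinarith [mul_nonneg (sub_nonneg.2 hkν) hu, mul_nonneg (sub_nonneg.2 hkν) (sub_nonneg.2 hu1),
          mul_nonneg (sub_nonneg.2 hkN) hε, mul_nonneg (sub_nonneg.2 hkν) hr]
    · have hNν : νr ≤ Nr := hkν.trans hkN
      constructor
      · nlinarith [mul_nonneg (sub_nonneg.2 hkν) (neg_nonneg.2 hu.le),
          mul_nonneg (sub_nonneg.2 hNν) (by linarith : (0:ℝ) ≤ r + u),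
          mul_nonneg (sub_nonneg.2 hkN) hε, mul_nonneg (sub_nonneg.2 hkν) hr]
      · nlinarith [mul_nonneg (sub_nonneg.2 hkν) (neg_nonneg.2 hu.le),
          mul_nonneg (sub_nonneg.2 hNν) (by linarith : (0:ℝ) ≤ r + u),
          mul_nonneg (sub_nonneg.2 hkN) hε, mul_nonneg (sub_nonneg.2 hkν) hr]
  calc |u - (SA + SB)| * νr = |(u - (SA + SB)) * νr| := by
        rw [abs_mul, abs_of_pos hν]
    _ = |νr * u - (νr * SA + νr * SB)| := by congr 1; ring
    _ ≤ (Nr - νr) * r + Nr * ε := key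

-- iteration lemma
lemma kol_iter {E F' : Type*} [NormedAddCommGroup E] [NormedSpace ℝ E]
    [NormedAddCommGroup F'] [NormedSpace ℝ F'] [CompleteSpace E]
    (T : E →L[ℝ] F') (θ : ℝ) (hθ0 : 0 ≤ θ) (hθ1 : θ < 1)
    (h : ∀ f : F', ∃ g : E, ‖g‖ ≤ ‖f‖ ∧ ‖f - T g‖ ≤ θ * ‖f‖) :
    Function.Surjective T := by
  intro f₀
  choose step h1 h2 using h
  set u : ℕ → F' := fun k => (fun v => v - T (step v))^[k] f₀ with hu
  have hu0 : u 0 = f₀ := rfl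
  have hus : ∀ k, u (k + 1) = u k - T (step (u k)) := fun k =>
    Function.iterate_succ_apply' _ _ _
  have hnorm : ∀ k, ‖u k‖ ≤ θ ^ k * ‖f₀‖ := by
    intro k; induction k with
    | zero => simp [hu0]
    | succ k ih =>
      rw [hus]
      calc ‖u k - T (step (u k))‖ ≤ θ * ‖u k‖ := h2 _
        _ ≤ θ * (θ ^ k * ‖f₀‖) := mul_le_mul_of_nonneg_left ih hθ0
        _ = θ ^ (k + 1) * ‖f₀‖ := by ring
  have hsum : Summable (fun k => step (u k)) := by
    apply Summable.of_norm_bounded (g := fun k => θ ^ k * ‖f₀‖)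
      ((summable_geometric_of_lt_one hθ0 hθ1).mul_right _)
    exact fun k => (h1 _).trans (hnorm k)
  refine ⟨∑' k, step (u k), ?_⟩
  have hTg : HasSum (fun k => T (step (u k))) (T (∑' k, step (u k))) := hsum.hasSum.mapL T
  have hpart : ∀ K, ∑ k ∈ Finset.range K, T (step (u k)) = f₀ - u K := by
    intro K; induction K with
    | zero => simp [hu0]
    | succ K ih => rw [Finset.sum_range_succ, ih, hus]; abel
  have hto0 : Filter.Tendsto u Filter.atTop (nhds 0) := by
    apply squeeze_zero_norm hnorm
    simpa using (tendsto_pow_atTop_nhds_zero_of_lt_one hθ0 hθ1).mul_const ‖f₀‖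
  have ht1 : Filter.Tendsto (fun K => ∑ k ∈ Finset.range K, T (step (u k)))
      Filter.atTop (nhds f₀) := by
    simp only [hpart]
    simpa using Filter.Tendsto.sub (tendsto_const_nhds (x := f₀)) hto0
  exact tendsto_nhds_unique hTg.tendsto_sum_nat ht1

lemma kol_step {n : ℕ}
    (X : Set (Fin (2 * n + 1) → unitInterval)) [CompactSpace X]
    (F : ℕ → Fin (2 * n + 1) → Finset (Set X))
    (hF : IsKolmogorovFamily X n F)
    (hemb : IsKolmogorovTypeEmbedding X F) (f : C(X, ℝ)) :
    ∃ g : C((Σ _ : Fin (2 * n + 1), unitInterval), ℝ),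
      ‖g‖ ≤ ‖f‖ ∧ ‖f - inducedL X g‖ ≤ (1 - 3 / (4 * (n + 1))) * ‖f‖ := by
  classical
  obtain ⟨hclosed, hcover, hdisjF, -⟩ := hF
  by_cases hf0 : f = 0
  · refine ⟨0, by simp, ?_⟩
    have hL0 : inducedL X (0 : C((Σ _ : Fin (2 * n + 1), unitInterval), ℝ)) = 0 := by
      ext x; simp [inducedL]
    rw [hf0, hL0, sub_zero, norm_zero, mul_zero]
  have hr : (0:ℝ) < ‖f‖ := norm_pos_iff.2 hf0
  set r : ℝ := ‖f‖ with hrdef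
  set ε : ℝ := r / (4 * (2 * n + 1)) with hε
  have hεpos : 0 < ε := by positivity
  have huc : UniformContinuous f := CompactSpace.uniformContinuous_of_continuous f.continuous
  rw [Metric.uniformContinuous_iff] at huc
  obtain ⟨δ, hδ, hδ'⟩ := huc ε hεpos
  obtain ⟨m, hmesh, hsep⟩ := hemb δ hδ
  -- constants
  set ν : ℝ := (n:ℝ) + 1 with hν
  have hνpos : (0:ℝ) < ν := by rw [hν]; positivity
  have hν1 : (1:ℝ) ≤ ν := by rw [hν]; have := Nat.cast_nonneg (α := ℝ) n; linarith
  set c : Set X → ℝ := fun s => if h : s.Nonempty then f h.choose / ν else 0 with hc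
  have hcbound : ∀ s : Set X, |c s| ≤ r / ν := by
    intro s
    rw [hc]
    dsimp only
    split
    · rename_i hne
      have hb : |f hne.choose| ≤ r := by
        rw [hrdef, ← Real.norm_eq_abs]; exact f.norm_coe_le_norm _
      rw [abs_div, abs_of_pos hνpos]
      exact (div_le_div_iff_of_pos_right hνpos).2 hb
    · simp only [abs_zero]; positivity
  have hcval : ∀ (s : Set X) (x : X), x ∈ s → ∃ y ∈ s, c s = f y / ν := by
    intro s x hx
    have hne : s.Nonempty := ⟨x, hx⟩
    exact ⟨hne.choose, hne.choose_spec, by rw [hc]; simp [hne]⟩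
  -- the images
  set K : Fin (2 * n + 1) → Set X → Set unitInterval :=
    fun i s => (fun x : X => (x : Fin (2 * n + 1) → unitInterval) i) '' s with hK
  have hKcomp : ∀ i, ∀ s ∈ F m i, IsCompact (K i s) := by
    intro i s hs
    exact ((hclosed m i s hs).isCompact).image
      ((continuous_apply i).comp continuous_subtype_val)
  -- build g i on each copy of [0,1]
  have hex : ∀ i : Fin (2 * n + 1), ∃ h : C(unitInterval, ℝ),
      (∀ s ∈ F m i, ∀ y ∈ K i s, h y = c s) ∧ ∀ y, |h y| ≤ r / ν := by
    intro i
    exact kol_piecewise (F m i) (K i) (hKcomp i)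
      (fun s hs t ht hst => hsep i s hs t ht hst) c (r / ν) (by positivity)
      (fun s _ => hcbound s)
  choose g hgval hgbound using hex
  set G : C((Σ _ : Fin (2 * n + 1), unitInterval), ℝ) :=
    ⟨fun z => g z.1 z.2, continuous_sigma fun i => (g i).continuous⟩ with hG
  have hGnorm : ∀ z, |G z| ≤ r / ν := fun z => hgbound z.1 z.2
  refine ⟨G, ?_, ?_⟩
  · apply (ContinuousMap.norm_le _ hr.le).2
    intro z
    rw [Real.norm_eq_abs]
    refine (hGnorm z).trans ?_
    rw [div_le_iff₀ hνpos]
    nlinarith [mul_le_mul_of_nonneg_left hν1 hr.le]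
  · have hθr : (0:ℝ) ≤ (1 - 3 / (4 * ((n:ℝ) + 1))) * r := by
      apply mul_nonneg _ hr.le
      rw [sub_nonneg, div_le_one (by positivity)]
      nlinarith [Nat.cast_nonneg (α := ℝ) n]
    apply (ContinuousMap.norm_le _ hθr).2
    intro x
    -- the good index set
    set A : Finset (Fin (2 * n + 1)) :=
      Finset.univ.filter (fun i => ∃ s ∈ F m i, x ∈ s) with hA
    have hcard : (n + 1 : ℕ) ≤ A.card := by
      have hset : {i : Fin (2 * n + 1) | ∃ s ∈ F m i, x ∈ s} = ↑A := by
        ext i; simp [hA]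
      have := hcover m x
      rwa [hset, Set.ncard_coe_finset] at this
    set kA : ℕ := A.card with hkA
    have hkN : kA ≤ 2 * n + 1 := le_trans (Finset.card_le_card (Finset.subset_univ A))
      (by simp)
    -- value of L G at x
    have hLG : (inducedL X G) x = (∑ i ∈ A, g i ((x : Fin (2*n+1) → unitInterval) i))
        + ∑ i ∈ Finset.univ.filter (fun i => ¬ ∃ s ∈ F m i, x ∈ s),
            g i ((x : Fin (2*n+1) → unitInterval) i) := by
      rw [show (inducedL X G) x = ∑ i, G ⟨i, (x : Fin (2*n+1) → unitInterval) i⟩ from rfl]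
      rw [hA, ← Finset.sum_filter_add_sum_filter_not Finset.univ
        (fun i => ∃ s ∈ F m i, x ∈ s)]
      rfl
    set u : ℝ := f x with hu
    have hu1 : u ≤ r := by
      rw [hu, hrdef]
      exact le_trans (le_abs_self _) (by rw [← Real.norm_eq_abs]; exact f.norm_coe_le_norm x)
    have hu2 : -r ≤ u := by
      rw [hu, hrdef]
      refine neg_le_of_neg_le ?_
      exact le_trans (neg_le_abs _) (by rw [← Real.norm_eq_abs]; exact f.norm_coe_le_norm x)
    -- bounds on the good terms
    have hgood : ∀ i ∈ A, (u - ε) / ν ≤ g i ((x : Fin (2*n+1) → unitInterval) i) ∧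
        g i ((x : Fin (2*n+1) → unitInterval) i) ≤ (u + ε) / ν := by
      intro i hi
      rw [hA, Finset.mem_filter] at hi
      obtain ⟨-, s, hsF, hxs⟩ := hi
      have hval : g i ((x : Fin (2*n+1) → unitInterval) i) = c s :=
        hgval i s hsF _ ⟨x, hxs, rfl⟩
      obtain ⟨y, hys, hcy⟩ := hcval s x hxs
      have hdist : dist y x < δ := by
        have hb : Bornology.IsBounded s := ((hclosed m i s hsF).isCompact).isBounded
        exact lt_of_le_of_lt (Metric.dist_le_diam_of_mem hb hys hxs) (hmesh i s hsF)
      have hfy : |f y - f x| < ε := by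
        rw [← Real.dist_eq]; exact hδ' hdist
      rw [hval, hcy]
      rw [abs_lt] at hfy
      constructor
      · exact (div_le_div_iff_of_pos_right hνpos).2 (by linarith)
      · exact (div_le_div_iff_of_pos_right hνpos).2 (by linarith)
    have hSA1 : (kA : ℝ) * ((u - ε) / ν) ≤ ∑ i ∈ A, g i ((x : Fin (2*n+1) → unitInterval) i) := by
      have := Finset.card_nsmul_le_sum A _ _ (fun i hi => (hgood i hi).1)
      rwa [nsmul_eq_mul] at this
    have hSA2 : ∑ i ∈ A, g i ((x : Fin (2*n+1) → unitInterval) i) ≤ (kA : ℝ) * ((u + ε) / ν) := by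
      have := Finset.sum_le_card_nsmul A _ _ (fun i hi => (hgood i hi).2)
      rwa [nsmul_eq_mul] at this
    -- bound on the bad terms
    set Ac : Finset (Fin (2 * n + 1)) :=
      Finset.univ.filter (fun i => ¬ ∃ s ∈ F m i, x ∈ s) with hAc
    have hAcard : (Ac.card : ℝ) = (2 * n + 1 : ℝ) - kA := by
      have h2 := Finset.card_filter_add_card_filter_not
        (p := fun i : Fin (2 * n + 1) => ∃ s ∈ F m i, x ∈ s) (s := Finset.univ)
      simp only [Finset.card_univ, Fintype.card_fin] at h2
      have h1 : kA + Ac.card = 2 * n + 1 := by rw [hkA, hAc]; exact h2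
      have h3 : ((kA : ℝ) + (Ac.card : ℝ)) = ((2 * n + 1 : ℕ) : ℝ) := by exact_mod_cast h1
      push_cast at h3
      linarith
    have hSB : |∑ i ∈ Ac, g i ((x : Fin (2*n+1) → unitInterval) i)| ≤
        ((2 * n + 1 : ℝ) - kA) * (r / ν) := by
      calc |∑ i ∈ Ac, g i ((x : Fin (2*n+1) → unitInterval) i)|
          ≤ ∑ i ∈ Ac, |g i ((x : Fin (2*n+1) → unitInterval) i)| :=
            Finset.abs_sum_le_sum_abs _ _
        _ ≤ Ac.card • (r / ν) := Finset.sum_le_card_nsmul _ _ _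
            (fun i _ => hgbound i _)
        _ = ((2 * n + 1 : ℝ) - kA) * (r / ν) := by rw [nsmul_eq_mul, hAcard]
    -- conclude
    have hest := kol_est ν kA (2 * n + 1 : ℝ) r ε u
      (∑ i ∈ A, g i ((x : Fin (2*n+1) → unitInterval) i))
      (∑ i ∈ Ac, g i ((x : Fin (2*n+1) → unitInterval) i))
      hνpos (by rw [hν]; exact_mod_cast hcard) (by exact_mod_cast hkN)
      hr.le hεpos.le hu1 hu2 hSA1 hSA2 hSB
    have heq : ((2 * n + 1 : ℝ) - ν) * r + (2 * n + 1 : ℝ) * ε = ((1 - 3 / (4 * (ν))) * r) * ν := by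
      rw [hε, hν]
      field_simp
      ring
    rw [Real.norm_eq_abs, ContinuousMap.sub_apply, hLG]
    calc |f x - _| ≤ (((2 * n + 1 : ℝ) - ν) * r + (2 * n + 1 : ℝ) * ε) / ν := hest
      _ = (1 - 3 / (4 * ν)) * r := by rw [heq, mul_div_assoc, div_self hνpos.ne', mul_one]
      _ = (1 - 3 / (4 * ((n:ℝ) + 1))) * ‖f‖ := by rw [hν, hrdef]

/-- A Kolmogorov-type embedding `X ⊆ [0,1]^{2n+1}` is basic: the induced transformation
`L : C(Z, ℝ) → C(X, ℝ)` is surjective, i.e. every continuous `f : X → ℝ` is of the form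
`f x = g y₁ + ⋯ + g y_{2n+1}` for some continuous `g : Z → ℝ`. -/
theorem statement7 {n : ℕ} (hn : 1 ≤ n)
    (X : Set (Fin (2 * n + 1) → unitInterval)) [CompactSpace X]
    (F : ℕ → Fin (2 * n + 1) → Finset (Set X))
    (hF : IsKolmogorovFamily X n F)
    (hemb : IsKolmogorovTypeEmbedding X F) :
    Function.Surjective (inducedL X) := by
  classical
  set Z := (Σ _ : Fin (2 * n + 1), unitInterval) with hZ
  have hbound : ∀ g : C(Z, ℝ), ‖inducedL X g‖ ≤ (2 * n + 1 : ℝ) * ‖g‖ := by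
    intro g
    apply (ContinuousMap.norm_le _ (by positivity)).2
    intro x
    rw [show (inducedL X g) x = ∑ i, g ⟨i, (x : Fin (2*n+1) → unitInterval) i⟩ from rfl,
      Real.norm_eq_abs]
    calc |∑ i, g ⟨i, (x : Fin (2*n+1) → unitInterval) i⟩|
        ≤ ∑ i, |g ⟨i, (x : Fin (2*n+1) → unitInterval) i⟩| := Finset.abs_sum_le_sum_abs _ _
      _ ≤ Finset.univ.card • ‖g‖ := Finset.sum_le_card_nsmul _ _ _
          (fun i _ => by rw [← Real.norm_eq_abs]; exact g.norm_coe_le_norm _)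
      _ = (2 * n + 1 : ℝ) * ‖g‖ := by
          rw [Finset.card_univ, Fintype.card_fin, nsmul_eq_mul]; push_cast; ring
  let Llin : C(Z, ℝ) →ₗ[ℝ] C(X, ℝ) :=
    { toFun := inducedL X
      map_add' := by
        intro g h; ext x
        show ∑ i, (g + h) ⟨i, (x : Fin (2*n+1) → unitInterval) i⟩ = _
        rw [show ((inducedL X g + inducedL X h) x : ℝ)
          = (∑ i, g ⟨i, (x : Fin (2*n+1) → unitInterval) i⟩)
            + ∑ i, h ⟨i, (x : Fin (2*n+1) → unitInterval) i⟩ from rfl]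
        rw [← Finset.sum_add_distrib]
        simp
      map_smul' := by
        intro a g; ext x
        show ∑ i, (a • g) ⟨i, (x : Fin (2*n+1) → unitInterval) i⟩
          = (a • inducedL X g) x
        rw [show ((a • inducedL X g) x : ℝ)
          = a * ∑ i, g ⟨i, (x : Fin (2*n+1) → unitInterval) i⟩ from rfl]
        rw [Finset.mul_sum]
        simp }
  let LC : C(Z, ℝ) →L[ℝ] C(X, ℝ) := Llin.mkContinuous (2 * n + 1 : ℝ) hbound
  have hθ0 : (0:ℝ) ≤ 1 - 3 / (4 * ((n:ℝ) + 1)) := by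
    rw [sub_nonneg, div_le_one (by positivity)]
    nlinarith [Nat.cast_nonneg (α := ℝ) n]
  have hθ1 : (1:ℝ) - 3 / (4 * ((n:ℝ) + 1)) < 1 := by
    rw [sub_lt_self_iff]
    positivity
  have hsurj : Function.Surjective LC :=
    kol_iter LC _ hθ0 hθ1 (fun f => kol_step X F hF hemb f)
  intro f
  obtain ⟨g, hg⟩ := hsurj f
  exact ⟨g, hg⟩
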